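/- Let ζ ∈ ℝ and let A : ℝ → ℝ be measurable with ∫₀^∞ ∫_ζ^∞ A(x + s)² dx ds < ∞. Define k(x, t) = ∫₀^∞ A(x + s) A(t + s) ds for x, t ≥ ζ. Then the integral operator K on L²(ζ, ∞) given by (Kf)(x) = ∫_ζ^∞ k(x, t) f(t) dt is a bounded self-adjoint operator, and for every f ∈ L²(ζ, ∞) one has ⟨Kf, f⟩ = ∫₀^∞ |F(s)|² ds ≥ 0, where F(s) = ∫_ζ^∞ A(x + s) f(x) dx; in particular K is a nonnegative operator. -/

import Mathlib

open MeasureTheory ENNReal Complex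

noncomputable section StmtNineAux
set_option linter.unusedSectionVars false
set_option maxHeartbeats 1000000

namespace StmtNine

variable {α β : Type*} [MeasurableSpace α] [MeasurableSpace β]
  {μ : Measure α} {ν : Measure β} [SigmaFinite μ] [SigmaFinite ν]

/-- Cauchy–Schwarz для lintegrals. -/
lemma lint_CS {g f : α → ℝ≥0∞}
    (hg : AEMeasurable g μ) (hf : AEMeasurable f μ) :
    ∫⁻ x, g x * f x ∂μ ≤
      (∫⁻ x, g x ^ (2:ℝ) ∂μ) ^ (1/2:ℝ) * (∫⁻ x, f x ^ (2:ℝ) ∂μ) ^ (1/2:ℝ) := by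
  have h22 : (2:ℝ).HolderConjugate 2 := Real.HolderConjugate.two_two
  simpa using ENNReal.lintegral_mul_le_Lp_mul_Lq μ h22 hg hf

lemma enorm_integral_mul_le {g f : α → ℂ}
    (hg : AEStronglyMeasurable g μ) (hf : AEStronglyMeasurable f μ) :
    (‖∫ x, g x * f x ∂μ‖₊ : ℝ≥0∞) ≤
      (∫⁻ x, (‖g x‖₊ : ℝ≥0∞) ^ (2:ℝ) ∂μ) ^ (1/2:ℝ) *
        (∫⁻ x, (‖f x‖₊ : ℝ≥0∞) ^ (2:ℝ) ∂μ) ^ (1/2:ℝ) := by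
  calc (‖∫ x, g x * f x ∂μ‖₊ : ℝ≥0∞) ≤ ∫⁻ x, ‖g x * f x‖₊ ∂μ :=
        enorm_integral_le_lintegral_enorm _
    _ = ∫⁻ x, (‖g x‖₊ : ℝ≥0∞) * (‖f x‖₊ : ℝ≥0∞) ∂μ := by
        simp [nnnorm_mul, ENNReal.coe_mul]
    _ ≤ _ := lint_CS hg.enorm hf.enorm

lemma lintegral_sq_eq (μ : Measure α) (f : α → ℂ) :
    ∫⁻ x, (‖f x‖₊ : ℝ≥0∞) ^ (2:ℝ) ∂μ = (eLpNorm f 2 μ) ^ (2:ℝ) := by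
  rw [eLpNorm_eq_lintegral_rpow_enorm_toReal two_ne_zero ENNReal.ofNat_ne_top, ← ENNReal.rpow_mul]
  norm_num [enorm_eq_nnnorm]

lemma lintegral_sq_ne_top {f : α → ℂ}
    (hf : MemLp f 2 μ) : ∫⁻ x, (‖f x‖₊ : ℝ≥0∞) ^ (2:ℝ) ∂μ ≠ ∞ := by
  rw [lintegral_sq_eq]
  exact (ENNReal.rpow_lt_top_of_nonneg (by norm_num) hf.2.ne).ne

lemma integrable_mul_of_sq {g f : α → ℂ}
    (hg : AEStronglyMeasurable g μ) (hf : AEStronglyMeasurable f μ)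
    (hg2 : ∫⁻ x, (‖g x‖₊ : ℝ≥0∞) ^ (2:ℝ) ∂μ ≠ ∞)
    (hf2 : ∫⁻ x, (‖f x‖₊ : ℝ≥0∞) ^ (2:ℝ) ∂μ ≠ ∞) :
    Integrable (fun x => g x * f x) μ := by
  refine ⟨hg.mul hf, ?_⟩
  rw [HasFiniteIntegral]
  calc ∫⁻ x, (‖g x * f x‖₊ : ℝ≥0∞) ∂μ
      = ∫⁻ x, (‖g x‖₊ : ℝ≥0∞) * (‖f x‖₊ : ℝ≥0∞) ∂μ := by simp [nnnorm_mul]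
    _ ≤ _ := lint_CS hg.enorm hf.enorm
    _ < ∞ := ENNReal.mul_lt_top
        (ENNReal.rpow_lt_top_of_nonneg (by norm_num) hg2)
        (ENNReal.rpow_lt_top_of_nonneg (by norm_num) hf2)

lemma meas_B {b : α × β → ℂ} (hb : Measurable b) :
    Measurable fun s => ∫⁻ x, (‖b (s, x)‖₊ : ℝ≥0∞) ^ (2:ℝ) ∂ν :=
  Measurable.lintegral_prod_right' (f := fun q => (‖b q‖₊ : ℝ≥0∞) ^ (2:ℝ))
    (hb.enorm.pow_const _)

lemma lintegral_prod_sq {b : α × β → ℂ} (hb : Measurable b) :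
    ∫⁻ s, ∫⁻ x, (‖b (s, x)‖₊ : ℝ≥0∞) ^ (2:ℝ) ∂ν ∂μ
      = ∫⁻ q, (‖b q‖₊ : ℝ≥0∞) ^ (2:ℝ) ∂(μ.prod ν) :=
  (lintegral_prod _ (hb.enorm.pow_const _).aemeasurable).symm

lemma ae_section_lt_top {b : α × β → ℂ} (hb : Measurable b)
    (hb2 : ∫⁻ q, (‖b q‖₊ : ℝ≥0∞) ^ (2:ℝ) ∂(μ.prod ν) ≠ ∞) :
    ∀ᵐ s ∂μ, ∫⁻ x, (‖b (s, x)‖₊ : ℝ≥0∞) ^ (2:ℝ) ∂ν < ∞ := by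
  rw [← lintegral_prod_sq hb] at hb2
  exact ae_lt_top (meas_B hb) hb2

lemma hs_eLpNorm_le {b : α × β → ℂ} (hb : Measurable b) {f : β → ℂ}
    (hf : AEStronglyMeasurable f ν) :
    eLpNorm (fun s => ∫ x, b (s, x) * f x ∂ν) 2 μ ≤
      (∫⁻ q, (‖b q‖₊ : ℝ≥0∞) ^ (2:ℝ) ∂(μ.prod ν)) ^ (1/2:ℝ) * eLpNorm f 2 ν := by
  classical
  set L : ℝ≥0∞ := ∫⁻ x, (‖f x‖₊ : ℝ≥0∞) ^ (2:ℝ) ∂ν with hL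
  set M : ℝ≥0∞ := ∫⁻ q, (‖b q‖₊ : ℝ≥0∞) ^ (2:ℝ) ∂(μ.prod ν) with hM
  have hLe : eLpNorm f 2 ν = L ^ (1/2:ℝ) := by
    rw [eLpNorm_eq_lintegral_rpow_enorm_toReal two_ne_zero ENNReal.ofNat_ne_top]
    norm_num [hL, enorm_eq_nnnorm]
  have key : ∀ s, (‖∫ x, b (s, x) * f x ∂ν‖₊ : ℝ≥0∞) ≤
      (∫⁻ x, (‖b (s, x)‖₊ : ℝ≥0∞) ^ (2:ℝ) ∂ν) ^ (1/2:ℝ) * L ^ (1/2:ℝ) := fun s =>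
    enorm_integral_mul_le ((hb.comp (measurable_prodMk_left)).aestronglyMeasurable) hf
  calc eLpNorm (fun s => ∫ x, b (s, x) * f x ∂ν) 2 μ
      = (∫⁻ s, (‖∫ x, b (s, x) * f x ∂ν‖₊ : ℝ≥0∞) ^ (2:ℝ) ∂μ) ^ (1/2:ℝ) := by
        rw [eLpNorm_eq_lintegral_rpow_enorm_toReal two_ne_zero ENNReal.ofNat_ne_top]; norm_num [enorm_eq_nnnorm]
    _ ≤ (∫⁻ s, ((∫⁻ x, (‖b (s, x)‖₊ : ℝ≥0∞) ^ (2:ℝ) ∂ν) ^ (1/2:ℝ) * L ^ (1/2:ℝ)) ^ (2:ℝ) ∂μ)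
          ^ (1/2:ℝ) := by
        refine ENNReal.rpow_le_rpow (lintegral_mono fun s => ?_) (by norm_num)
        exact ENNReal.rpow_le_rpow (key s) (by norm_num)
    _ = (∫⁻ s, (∫⁻ x, (‖b (s, x)‖₊ : ℝ≥0∞) ^ (2:ℝ) ∂ν) * L ∂μ) ^ (1/2:ℝ) := by
        congr 1
        refine lintegral_congr fun s => ?_
        rw [ENNReal.mul_rpow_of_nonneg _ _ (by norm_num : (0:ℝ) ≤ 2),
          ← ENNReal.rpow_mul, ← ENNReal.rpow_mul]
        norm_num
    _ = (M * L) ^ (1/2:ℝ) := by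
        rw [lintegral_mul_const _ (meas_B hb), lintegral_prod_sq hb]
    _ = M ^ (1/2:ℝ) * eLpNorm f 2 ν := by
        rw [ENNReal.mul_rpow_of_nonneg _ _ (by norm_num), hLe]

lemma hs_ae_integrable {b : α × β → ℂ} (hb : Measurable b)
    (hb2 : ∫⁻ q, (‖b q‖₊ : ℝ≥0∞) ^ (2:ℝ) ∂(μ.prod ν) ≠ ∞) {f : β → ℂ}
    (hf : MemLp f 2 ν) :
    ∀ᵐ s ∂μ, Integrable (fun x => b (s, x) * f x) ν := by
  filter_upwards [ae_section_lt_top hb hb2] with s hs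
  exact integrable_mul_of_sq ((hb.comp measurable_prodMk_left).aestronglyMeasurable)
    hf.1 hs.ne (lintegral_sq_ne_top hf)

lemma hs_aestronglyMeasurable {b : α × β → ℂ} (hb : Measurable b) {f : β → ℂ}
    (hf : AEStronglyMeasurable f ν) :
    AEStronglyMeasurable (fun s => ∫ x, b (s, x) * f x ∂ν) μ := by
  have heq : (fun s => ∫ x, b (s, x) * f x ∂ν) =
      fun s => ∫ x, b (s, x) * (hf.mk f) x ∂ν := by
    funext s
    exact integral_congr_ae (hf.ae_eq_mk.mono fun x hx => by dsimp only; rw [hx])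
  rw [heq]
  have : StronglyMeasurable fun q : α × β => b q * (hf.mk f) q.2 :=
    (hb.stronglyMeasurable).mul (hf.stronglyMeasurable_mk.comp_measurable measurable_snd)
  exact this.integral_prod_right'.aestronglyMeasurable

lemma hs_memLp {b : α × β → ℂ} (hb : Measurable b)
    (hb2 : ∫⁻ q, (‖b q‖₊ : ℝ≥0∞) ^ (2:ℝ) ∂(μ.prod ν) ≠ ∞) {f : β → ℂ}
    (hf : MemLp f 2 ν) :
    MemLp (fun s => ∫ x, b (s, x) * f x ∂ν) 2 μ := by
  refine ⟨hs_aestronglyMeasurable hb hf.1, ?_⟩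
  refine lt_of_le_of_lt (hs_eLpNorm_le hb hf.1) ?_
  exact ENNReal.mul_lt_top (ENNReal.rpow_lt_top_of_nonneg (by norm_num) hb2) hf.2

/-- The Hilbert–Schmidt integral operator as a continuous linear map. -/
lemma exists_hsCLM (μ : Measure α) (ν : Measure β) [SigmaFinite μ] [SigmaFinite ν]
    {b : α × β → ℂ} (hb : Measurable b)
    (hb2 : ∫⁻ q, (‖b q‖₊ : ℝ≥0∞) ^ (2:ℝ) ∂(μ.prod ν) ≠ ∞) :
    ∃ T : Lp ℂ 2 ν →L[ℂ] Lp ℂ 2 μ, ∀ f : Lp ℂ 2 ν,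
      (T f : α → ℂ) =ᵐ[μ] fun s => ∫ x, b (s, x) * (f : β → ℂ) x ∂ν := by
  have mem : ∀ f : Lp ℂ 2 ν, MemLp (fun s => ∫ x, b (s, x) * (f : β → ℂ) x ∂ν) 2 μ :=
    fun f => hs_memLp hb hb2 (Lp.memLp f)
  let Tlin : Lp ℂ 2 ν →ₗ[ℂ] Lp ℂ 2 μ :=
    { toFun := fun f => (mem f).toLp _
      map_add' := by
        intro f g
        rw [← MemLp.toLp_add (mem f) (mem g)]
        apply MemLp.toLp_congr
        have h1 : (↑(f + g) : β → ℂ) =ᵐ[ν] (f : β → ℂ) + (g : β → ℂ) := Lp.coeFn_add f g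
        have e1 : (fun s => ∫ x, b (s, x) * (↑(f + g) : β → ℂ) x ∂ν) =
            fun s => ∫ x, b (s, x) * ((f : β → ℂ) x + (g : β → ℂ) x) ∂ν := by
          funext s
          exact integral_congr_ae (h1.mono fun x hx => by dsimp only; rw [hx]; rfl)
        rw [e1]
        filter_upwards [hs_ae_integrable hb hb2 (Lp.memLp f),
          hs_ae_integrable hb hb2 (Lp.memLp g)] with s hsf hsg
        simp only [Pi.add_apply]
        rw [← integral_add hsf hsg]
        congr 1; funext x; ring
      map_smul' := by
        intro c f
        simp only [RingHom.id_apply]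
        rw [← MemLp.toLp_const_smul c (mem f)]
        apply MemLp.toLp_congr
        have h1 : (↑(c • f) : β → ℂ) =ᵐ[ν] c • (f : β → ℂ) := Lp.coeFn_smul c f
        have e1 : (fun s => ∫ x, b (s, x) * (↑(c • f) : β → ℂ) x ∂ν) =
            fun s => ∫ x, b (s, x) * (c * (f : β → ℂ) x) ∂ν := by
          funext s
          exact integral_congr_ae (h1.mono fun x hx => by dsimp only; rw [hx]; rfl)
        rw [e1]
        refine Filter.Eventually.of_forall fun s => ?_
        simp only [Pi.smul_apply, smul_eq_mul]
        rw [← integral_const_mul]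
        congr 1; funext x; ring }
  refine ⟨Tlin.mkContinuous ((∫⁻ q, (‖b q‖₊ : ℝ≥0∞) ^ (2:ℝ) ∂(μ.prod ν)) ^ (1/2:ℝ)).toReal
    (fun f => ?_), fun f => MemLp.coeFn_toLp (mem f)⟩
  show ‖(mem f).toLp _‖ ≤ _
  rw [Lp.norm_toLp, Lp.norm_def, ← ENNReal.toReal_mul]
  refine ENNReal.toReal_mono ?_ (hs_eLpNorm_le hb (Lp.aestronglyMeasurable f))
  exact ENNReal.mul_ne_top (ENNReal.rpow_lt_top_of_nonneg (by norm_num) hb2).ne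
    (Lp.eLpNorm_ne_top f)

/-- The adjoint of a Hilbert–Schmidt integral operator with a conjugation-symmetric kernel. -/
lemma hs_adjoint (μ : Measure α) (ν : Measure β) [SigmaFinite μ] [SigmaFinite ν]
    {b : α × β → ℂ} (hb : Measurable b)
    (hb2 : ∫⁻ q, (‖b q‖₊ : ℝ≥0∞) ^ (2:ℝ) ∂(μ.prod ν) ≠ ∞)
    (hc : ∀ q, (starRingEnd ℂ) (b q) = b q)
    (S : Lp ℂ 2 ν →L[ℂ] Lp ℂ 2 μ)
    (hS : ∀ g : Lp ℂ 2 ν, (S g : α → ℂ) =ᵐ[μ] fun x => ∫ s, b (x, s) * (g : β → ℂ) s ∂ν)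
    (T : Lp ℂ 2 μ →L[ℂ] Lp ℂ 2 ν)
    (hT : ∀ f : Lp ℂ 2 μ, (T f : β → ℂ) =ᵐ[ν] fun s => ∫ x, b (x, s) * (f : α → ℂ) x ∂μ) :
    S = ContinuousLinearMap.adjoint T := by
  rw [ContinuousLinearMap.eq_adjoint_iff]
  intro g f
  have hg := Lp.aestronglyMeasurable g
  have hf := Lp.aestronglyMeasurable f
  set g' : β → ℂ := hg.mk _ with hg'def
  set f' : α → ℂ := hf.mk _ with hf'def
  have hg'm : Measurable g' := hg.stronglyMeasurable_mk.measurable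
  have hf'm : Measurable f' := hf.stronglyMeasurable_mk.measurable
  have hgae : (g : β → ℂ) =ᵐ[ν] g' := hg.ae_eq_mk
  have hfae : (f : α → ℂ) =ᵐ[μ] f' := hf.ae_eq_mk
  have hg2 : ∫⁻ s, (‖g' s‖₊ : ℝ≥0∞) ^ (2:ℝ) ∂ν ≠ ∞ := by
    have e : ∫⁻ s, (‖(g : β → ℂ) s‖₊ : ℝ≥0∞) ^ (2:ℝ) ∂ν
        = ∫⁻ s, (‖g' s‖₊ : ℝ≥0∞) ^ (2:ℝ) ∂ν :=
      lintegral_congr_ae (hgae.mono fun s hs => by dsimp only; rw [hs])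
    rw [← e]; exact lintegral_sq_ne_top (Lp.memLp g)
  have hf2 : ∫⁻ x, (‖f' x‖₊ : ℝ≥0∞) ^ (2:ℝ) ∂μ ≠ ∞ := by
    have e : ∫⁻ x, (‖(f : α → ℂ) x‖₊ : ℝ≥0∞) ^ (2:ℝ) ∂μ
        = ∫⁻ x, (‖f' x‖₊ : ℝ≥0∞) ^ (2:ℝ) ∂μ :=
      lintegral_congr_ae (hfae.mono fun x hx => by dsimp only; rw [hx])
    rw [← e]; exact lintegral_sq_ne_top (Lp.memLp f)
  set F : α × β → ℂ := fun q => (starRingEnd ℂ) (b q * g' q.2) * f' q.1 with hFdef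
  have hFint : Integrable F (μ.prod ν) := by
    have e : F = fun q => ((starRingEnd ℂ) (b q)) * (((starRingEnd ℂ) (g' q.2)) * f' q.1) := by
      funext q; simp only [hFdef, map_mul]; ring
    rw [e]
    refine integrable_mul_of_sq ?_ ?_ ?_ ?_
    · exact (continuous_star.measurable.comp hb).aestronglyMeasurable
    · exact (((continuous_star.measurable.comp (hg'm.comp measurable_snd))).mul
        (hf'm.comp measurable_fst)).aestronglyMeasurable
    · simpa using hb2
    · have e2 : (fun q : α × β => (‖(starRingEnd ℂ) (g' q.2) * f' q.1‖₊ : ℝ≥0∞) ^ (2:ℝ))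
          = fun q : α × β => ((‖f' q.1‖₊ : ℝ≥0∞) ^ (2:ℝ)) * ((‖g' q.2‖₊ : ℝ≥0∞) ^ (2:ℝ)) := by
        funext q
        rw [nnnorm_mul, ENNReal.coe_mul,
          ENNReal.mul_rpow_of_nonneg _ _ (by norm_num : (0:ℝ) ≤ 2)]
        simp [mul_comm]
      rw [e2, lintegral_prod_mul (f := fun x => (‖f' x‖₊ : ℝ≥0∞) ^ (2:ℝ))
        (g := fun y => (‖g' y‖₊ : ℝ≥0∞) ^ (2:ℝ)) (hf'm.enorm.pow_const _).aemeasurable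
        (hg'm.enorm.pow_const _).aemeasurable]
      exact ENNReal.mul_ne_top hf2 hg2
  have step1 : (inner ℂ (S g) f : ℂ)
      = ∫ x, (starRingEnd ℂ) ((S g : α → ℂ) x) * (f : α → ℂ) x ∂μ := by
    rw [L2.inner_def]; simp_rw [RCLike.inner_apply']
  have step2 : ∫ x, (starRingEnd ℂ) ((S g : α → ℂ) x) * (f : α → ℂ) x ∂μ
      = ∫ x, ∫ s, F (x, s) ∂ν ∂μ := by
    refine integral_congr_ae ?_
    filter_upwards [hS g, hfae] with x hx1 hx2
    rw [hx1, hx2]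
    have e1 : ∫ s, b (x, s) * (g : β → ℂ) s ∂ν = ∫ s, b (x, s) * g' s ∂ν :=
      integral_congr_ae (hgae.mono fun s hs => by dsimp only; rw [hs])
    rw [e1, ← integral_conj, ← smul_eq_mul,
      ← integral_smul_const (fun s => (starRingEnd ℂ) (b (x, s) * g' s)) (f' x)]
    simp [hFdef, smul_eq_mul]
  have step3 : ∫ x, ∫ s, F (x, s) ∂ν ∂μ = ∫ s, ∫ x, F (x, s) ∂μ ∂ν :=
    integral_integral_swap hFint
  have step4 : ∫ s, ∫ x, F (x, s) ∂μ ∂ν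
      = ∫ s, (starRingEnd ℂ) ((g : β → ℂ) s) * (T f : β → ℂ) s ∂ν := by
    refine integral_congr_ae ?_
    filter_upwards [hT f, hgae] with s hs1 hs2
    have e1 : ∀ x, F (x, s) = (starRingEnd ℂ) (g' s) • (b (x, s) * f' x) := fun x => by
      simp only [hFdef, map_mul, hc, smul_eq_mul]; ring
    calc ∫ x, F (x, s) ∂μ = ∫ x, (starRingEnd ℂ) (g' s) • (b (x, s) * f' x) ∂μ := by
          simp_rw [e1]
      _ = (starRingEnd ℂ) (g' s) * ∫ x, b (x, s) * f' x ∂μ := by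
          rw [integral_smul, smul_eq_mul]
      _ = (starRingEnd ℂ) ((g : β → ℂ) s) * (T f : β → ℂ) s := by
          rw [hs1, hs2]
          congr 1
          exact (integral_congr_ae (hfae.mono fun x hx => by rw [hx])).symm
  have step5 : ∫ s, (starRingEnd ℂ) ((g : β → ℂ) s) * (T f : β → ℂ) s ∂ν
      = (inner ℂ g (T f) : ℂ) := by
    rw [L2.inner_def]; simp_rw [RCLike.inner_apply']
  rw [step1, step2, step3, step4, step5]

end StmtNine

end StmtNineAux

set_option maxHeartbeats 2000000

open StmtNine in
/-- The positivity identity (6.51)–(6.52) for Christoffel–Darboux (Airy-type)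
kernels `k(x,t) = ∫₀^∞ A(x+s)A(t+s) ds`: the corresponding integral operator
`K` on `L²(ζ, ∞)` is bounded self-adjoint and
`⟨Kf, f⟩ = ∫₀^∞ |F(s)|² ds ≥ 0` with `F(s) = ∫_ζ^∞ A(x+s) f(x) dx`. -/
theorem stmt_9 (ζ : ℝ) (A : ℝ → ℝ) (hA : Measurable A)
    (hint : IntegrableOn (fun p : ℝ × ℝ => (A (p.1 + p.2)) ^ 2)
      (Set.Ioi ζ ×ˢ Set.Ioi (0 : ℝ))) :
    ∃ K : Lp ℂ 2 (volume.restrict (Set.Ioi ζ)) →L[ℂ]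
          Lp ℂ 2 (volume.restrict (Set.Ioi ζ)),
      (∀ f : Lp ℂ 2 (volume.restrict (Set.Ioi ζ)),
        ∀ᵐ x ∂(volume.restrict (Set.Ioi ζ)),
          (K f : ℝ → ℂ) x = ∫ t in Set.Ioi ζ,
            ((∫ s in Set.Ioi (0 : ℝ), A (x + s) * A (t + s) : ℝ) : ℂ) * f t) ∧
      IsSelfAdjoint K ∧
      (∀ f : Lp ℂ 2 (volume.restrict (Set.Ioi ζ)),
        (inner ℂ (K f) f : ℂ) =
          ((∫ s in Set.Ioi (0 : ℝ),
            ‖∫ x in Set.Ioi ζ, ((A (x + s) : ℝ) : ℂ) * f x‖ ^ 2 : ℝ) : ℂ) ∧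
        0 ≤ (inner ℂ (K f) f : ℂ).re) := by
  classical
  have hb : Measurable fun q : ℝ × ℝ => ((A (q.1 + q.2) : ℝ) : ℂ) :=
    Complex.measurable_ofReal.comp (hA.comp (measurable_fst.add measurable_snd))
  have hb' : Measurable fun q : ℝ × ℝ => ((A (q.2 + q.1) : ℝ) : ℂ) :=
    Complex.measurable_ofReal.comp (hA.comp (measurable_snd.add measurable_fst))
  have hprodeq : (volume.restrict (Set.Ioi ζ)).prod (volume.restrict (Set.Ioi (0:ℝ)))
      = (volume : Measure (ℝ × ℝ)).restrict (Set.Ioi ζ ×ˢ Set.Ioi (0:ℝ)) := by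
    rw [Measure.volume_eq_prod, Measure.prod_restrict]
  have hb2 : ∫⁻ q : ℝ × ℝ, (‖((A (q.1 + q.2) : ℝ) : ℂ)‖₊ : ℝ≥0∞) ^ (2:ℝ)
      ∂((volume.restrict (Set.Ioi ζ)).prod (volume.restrict (Set.Ioi (0:ℝ)))) ≠ ∞ := by
    rw [hprodeq]
    have h1 := hint.2
    rw [HasFiniteIntegral] at h1
    have e : ∀ q : ℝ × ℝ, (‖((A (q.1 + q.2) : ℝ) : ℂ)‖₊ : ℝ≥0∞) ^ (2:ℝ)
        = (‖A (q.1 + q.2) ^ 2‖₊ : ℝ≥0∞) := by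
      intro q
      rw [Complex.nnnorm_real, nnnorm_pow, ENNReal.coe_pow, ← ENNReal.rpow_natCast]
      norm_num
    rw [lintegral_congr e]
    exact h1.ne
  have hb2' : ∫⁻ q : ℝ × ℝ, (‖((A (q.2 + q.1) : ℝ) : ℂ)‖₊ : ℝ≥0∞) ^ (2:ℝ)
      ∂((volume.restrict (Set.Ioi (0:ℝ))).prod (volume.restrict (Set.Ioi ζ))) ≠ ∞ := by
    have hswap := lintegral_prod_swap (μ := volume.restrict (Set.Ioi ζ))
      (ν := volume.restrict (Set.Ioi (0:ℝ)))
      (f := fun q : ℝ × ℝ => (‖((A (q.1 + q.2) : ℝ) : ℂ)‖₊ : ℝ≥0∞) ^ (2:ℝ))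
    rw [show (fun q : ℝ × ℝ => (‖((A (q.2 + q.1) : ℝ) : ℂ)‖₊ : ℝ≥0∞) ^ (2:ℝ))
      = fun z : ℝ × ℝ => (‖((A (z.swap.1 + z.swap.2) : ℝ) : ℂ)‖₊ : ℝ≥0∞) ^ (2:ℝ) from rfl]
    rw [hswap]
    exact hb2
  obtain ⟨S, hS⟩ := StmtNine.exists_hsCLM (volume.restrict (Set.Ioi ζ))
    (volume.restrict (Set.Ioi (0:ℝ))) hb hb2
  obtain ⟨T, hT⟩ := StmtNine.exists_hsCLM (volume.restrict (Set.Ioi (0:ℝ)))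
    (volume.restrict (Set.Ioi ζ)) hb' hb2'
  have hadj : S = ContinuousLinearMap.adjoint T :=
    StmtNine.hs_adjoint _ _ hb hb2 (fun q => Complex.conj_ofReal _) S hS T hT
  have hinner : ∀ f : Lp ℂ 2 (volume.restrict (Set.Ioi ζ)),
      (inner ℂ ((S.comp T) f) f : ℂ) =
        ((∫ s in Set.Ioi (0 : ℝ),
          ‖∫ x in Set.Ioi ζ, ((A (x + s) : ℝ) : ℂ) * f x‖ ^ 2 : ℝ) : ℂ) := by
    intro f
    have h0 : (inner ℂ ((S.comp T) f) f : ℂ) = inner ℂ (T f) (T f) := by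
      rw [hadj]
      exact ContinuousLinearMap.adjoint_inner_left T f (T f)
    have h1 : (inner ℂ (T f) (T f) : ℂ) =
        ∫ s, ((‖(T f : ℝ → ℂ) s‖ ^ 2 : ℝ) : ℂ) ∂(volume.restrict (Set.Ioi (0:ℝ))) := by
      rw [L2.inner_def]
      congr 1
      funext s
      rw [RCLike.inner_apply', RCLike.conj_mul]
      norm_cast
    have h2 : ∫ s, ((‖(T f : ℝ → ℂ) s‖ ^ 2 : ℝ) : ℂ) ∂(volume.restrict (Set.Ioi (0:ℝ)))
        = ∫ s, ((‖∫ x in Set.Ioi ζ, ((A (x + s) : ℝ) : ℂ) * f x‖ ^ 2 : ℝ) : ℂ)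
            ∂(volume.restrict (Set.Ioi (0:ℝ))) := by
      refine integral_congr_ae ?_
      filter_upwards [hT f] with s hs
      rw [hs]
    rw [h0, h1, h2]; exact integral_ofReal (𝕜 := ℂ)
  refine ⟨S.comp T, fun f => ?_, ?_, fun f => ?_⟩
  · -- kernel representation
    have hf := Lp.aestronglyMeasurable f
    set f' : ℝ → ℂ := hf.mk _ with hf'def
    have hf'm : Measurable f' := hf.stronglyMeasurable_mk.measurable
    have hfae : (f : ℝ → ℂ) =ᵐ[volume.restrict (Set.Ioi ζ)] f' := hf.ae_eq_mk
    have hf2 : ∫⁻ t, (‖f' t‖₊ : ℝ≥0∞) ^ (2:ℝ) ∂(volume.restrict (Set.Ioi ζ)) ≠ ∞ := by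
      have e : ∫⁻ t, (‖(f : ℝ → ℂ) t‖₊ : ℝ≥0∞) ^ (2:ℝ) ∂(volume.restrict (Set.Ioi ζ))
          = ∫⁻ t, (‖f' t‖₊ : ℝ≥0∞) ^ (2:ℝ) ∂(volume.restrict (Set.Ioi ζ)) :=
        lintegral_congr_ae (hfae.mono fun t ht => by dsimp only; rw [ht])
      rw [← e]; exact StmtNine.lintegral_sq_ne_top (Lp.memLp f)
    have hW : (T f : ℝ → ℂ) =ᵐ[volume.restrict (Set.Ioi (0:ℝ))]
        fun s => ∫ t, ((A (t + s) : ℝ) : ℂ) * f' t ∂(volume.restrict (Set.Ioi ζ)) := by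
      filter_upwards [hT f] with s hs
      rw [hs]
      exact integral_congr_ae (hfae.mono fun t ht => by dsimp only; rw [ht])
    filter_upwards [hS (T f), StmtNine.ae_section_lt_top hb hb2] with x hx1 hx2
    show ((S (T f) : Lp ℂ 2 (volume.restrict (Set.Ioi ζ))) : ℝ → ℂ) x = _
    rw [hx1]
    show (∫ s, ((A (x + s) : ℝ) : ℂ) * (T f : ℝ → ℂ) s ∂(volume.restrict (Set.Ioi (0:ℝ)))) = _
    have e0 : ∫ s, ((A (x + s) : ℝ) : ℂ) * (T f : ℝ → ℂ) s ∂(volume.restrict (Set.Ioi (0:ℝ)))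
        = ∫ s, ((A (x + s) : ℝ) : ℂ) *
            (∫ t, ((A (t + s) : ℝ) : ℂ) * f' t ∂(volume.restrict (Set.Ioi ζ)))
            ∂(volume.restrict (Set.Ioi (0:ℝ))) :=
      integral_congr_ae (hW.mono fun s hs => by dsimp only; rw [hs])
    rw [e0]
    set F : ℝ × ℝ → ℂ :=
      fun q => ((A (x + q.1) : ℝ) : ℂ) * (((A (q.2 + q.1) : ℝ) : ℂ) * f' q.2) with hF
    have hFmeas : Measurable F := by
      refine Measurable.mul ?_ (Measurable.mul ?_ (hf'm.comp measurable_snd))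
      · exact Complex.measurable_ofReal.comp (hA.comp (measurable_fst.const_add x))
      · exact Complex.measurable_ofReal.comp (hA.comp (measurable_snd.add measurable_fst))
    have hFint : Integrable F
        ((volume.restrict (Set.Ioi (0:ℝ))).prod (volume.restrict (Set.Ioi ζ))) := by
      refine ⟨hFmeas.aestronglyMeasurable, ?_⟩
      rw [HasFiniteIntegral]
      have hGm : Measurable fun s : ℝ =>
          ∫⁻ t, (‖((A (t + s) : ℝ) : ℂ)‖₊ : ℝ≥0∞) ^ (2:ℝ) ∂(volume.restrict (Set.Ioi ζ)) :=
        Measurable.lintegral_prod_right'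
          (f := fun q : ℝ × ℝ => (‖((A (q.2 + q.1) : ℝ) : ℂ)‖₊ : ℝ≥0∞) ^ (2:ℝ))
          (hb'.enorm.pow_const _)
      have hBxm : Measurable fun s : ℝ => (‖((A (x + s) : ℝ) : ℂ)‖₊ : ℝ≥0∞) :=
        (Complex.measurable_ofReal.comp (hA.comp (measurable_const_add x))).enorm
      set Lf : ℝ≥0∞ := ∫⁻ t, (‖f' t‖₊ : ℝ≥0∞) ^ (2:ℝ) ∂(volume.restrict (Set.Ioi ζ)) with hLf
      calc ∫⁻ q, (‖F q‖₊ : ℝ≥0∞)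
            ∂((volume.restrict (Set.Ioi (0:ℝ))).prod (volume.restrict (Set.Ioi ζ)))
          = ∫⁻ s, ∫⁻ t, (‖F (s, t)‖₊ : ℝ≥0∞) ∂(volume.restrict (Set.Ioi ζ))
              ∂(volume.restrict (Set.Ioi (0:ℝ))) :=
            lintegral_prod _ hFmeas.enorm.aemeasurable
        _ = ∫⁻ s, (‖((A (x + s) : ℝ) : ℂ)‖₊ : ℝ≥0∞) *
              ∫⁻ t, (‖((A (t + s) : ℝ) : ℂ)‖₊ : ℝ≥0∞) * (‖f' t‖₊ : ℝ≥0∞)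
                ∂(volume.restrict (Set.Ioi ζ)) ∂(volume.restrict (Set.Ioi (0:ℝ))) := by
            refine lintegral_congr fun s => ?_
            rw [← lintegral_const_mul' _ _ ENNReal.coe_ne_top]
            refine lintegral_congr fun t => ?_
            simp [hF, nnnorm_mul, ENNReal.coe_mul, mul_assoc]
        _ ≤ ∫⁻ s, (‖((A (x + s) : ℝ) : ℂ)‖₊ : ℝ≥0∞) *
              ((∫⁻ t, (‖((A (t + s) : ℝ) : ℂ)‖₊ : ℝ≥0∞) ^ (2:ℝ)
                ∂(volume.restrict (Set.Ioi ζ))) ^ (1/2:ℝ) * Lf ^ (1/2:ℝ))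
              ∂(volume.restrict (Set.Ioi (0:ℝ))) := by
            refine lintegral_mono fun s => mul_le_mul_right ?_ _
            exact StmtNine.lint_CS
              ((Complex.measurable_ofReal.comp
                (hA.comp (measurable_add_const s))).enorm).aemeasurable
              hf'm.enorm.aemeasurable
        _ = (∫⁻ s, (‖((A (x + s) : ℝ) : ℂ)‖₊ : ℝ≥0∞) *
              (∫⁻ t, (‖((A (t + s) : ℝ) : ℂ)‖₊ : ℝ≥0∞) ^ (2:ℝ)
                ∂(volume.restrict (Set.Ioi ζ))) ^ (1/2:ℝ)
              ∂(volume.restrict (Set.Ioi (0:ℝ)))) * Lf ^ (1/2:ℝ) := by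
            rw [← lintegral_mul_const' (Lf ^ (1/2:ℝ)) _
              (ENNReal.rpow_lt_top_of_nonneg (by norm_num) hf2).ne]
            exact lintegral_congr fun s => by rw [mul_assoc]
        _ ≤ ((∫⁻ s, (‖((A (x + s) : ℝ) : ℂ)‖₊ : ℝ≥0∞) ^ (2:ℝ)
                ∂(volume.restrict (Set.Ioi (0:ℝ)))) ^ (1/2:ℝ) *
              (∫⁻ s, ((∫⁻ t, (‖((A (t + s) : ℝ) : ℂ)‖₊ : ℝ≥0∞) ^ (2:ℝ)
                ∂(volume.restrict (Set.Ioi ζ))) ^ (1/2:ℝ)) ^ (2:ℝ)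
                ∂(volume.restrict (Set.Ioi (0:ℝ)))) ^ (1/2:ℝ)) * Lf ^ (1/2:ℝ) :=
            mul_le_mul_left (StmtNine.lint_CS hBxm.aemeasurable
              (hGm.pow_const _).aemeasurable) _
        _ < ∞ := by
            have e1 : ∫⁻ s, ((∫⁻ t, (‖((A (t + s) : ℝ) : ℂ)‖₊ : ℝ≥0∞) ^ (2:ℝ)
                  ∂(volume.restrict (Set.Ioi ζ))) ^ (1/2:ℝ)) ^ (2:ℝ)
                  ∂(volume.restrict (Set.Ioi (0:ℝ)))
                = ∫⁻ q, (‖((A (q.2 + q.1) : ℝ) : ℂ)‖₊ : ℝ≥0∞) ^ (2:ℝ)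
                    ∂((volume.restrict (Set.Ioi (0:ℝ))).prod (volume.restrict (Set.Ioi ζ))) := by
              rw [← StmtNine.lintegral_prod_sq hb']
              refine lintegral_congr fun s => ?_
              rw [← ENNReal.rpow_mul]
              norm_num
            refine ENNReal.mul_lt_top (ENNReal.mul_lt_top ?_ ?_) ?_
            · exact ENNReal.rpow_lt_top_of_nonneg (by norm_num) hx2.ne
            · rw [e1]
              exact ENNReal.rpow_lt_top_of_nonneg (by norm_num) hb2'
            · exact ENNReal.rpow_lt_top_of_nonneg (by norm_num) hf2
    have e1 : ∀ s : ℝ, ((A (x + s) : ℝ) : ℂ) *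
        (∫ t, ((A (t + s) : ℝ) : ℂ) * f' t ∂(volume.restrict (Set.Ioi ζ)))
        = ∫ t, F (s, t) ∂(volume.restrict (Set.Ioi ζ)) := fun s => by
      simp only [hF]
      exact (integral_const_mul _ _).symm
    have e2 : ∀ t : ℝ, ∫ s, F (s, t) ∂(volume.restrict (Set.Ioi (0:ℝ)))
        = ((∫ s in Set.Ioi (0:ℝ), A (x + s) * A (t + s) : ℝ) : ℂ) * f' t := by
      intro t
      have ept : ∀ s : ℝ, F (s, t) = (((A (x + s) * A (t + s) : ℝ)) : ℂ) • f' t := fun s => by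
        simp only [hF, smul_eq_mul]
        push_cast
        ring
      rw [show (fun s => F (s, t)) = fun s => (((A (x + s) * A (t + s) : ℝ)) : ℂ) • f' t
        from funext ept]
      rw [integral_smul_const, smul_eq_mul]
      congr 1
      exact integral_ofReal (𝕜 := ℂ)
    calc ∫ s, ((A (x + s) : ℝ) : ℂ) *
          (∫ t, ((A (t + s) : ℝ) : ℂ) * f' t ∂(volume.restrict (Set.Ioi ζ)))
          ∂(volume.restrict (Set.Ioi (0:ℝ)))
        = ∫ s, ∫ t, F (s, t) ∂(volume.restrict (Set.Ioi ζ))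
            ∂(volume.restrict (Set.Ioi (0:ℝ))) := by rw [funext e1]
      _ = ∫ t, ∫ s, F (s, t) ∂(volume.restrict (Set.Ioi (0:ℝ)))
            ∂(volume.restrict (Set.Ioi ζ)) := integral_integral_swap hFint
      _ = ∫ t, ((∫ s in Set.Ioi (0:ℝ), A (x + s) * A (t + s) : ℝ) : ℂ) * f' t
            ∂(volume.restrict (Set.Ioi ζ)) := by rw [funext e2]
      _ = ∫ t in Set.Ioi ζ,
            ((∫ s in Set.Ioi (0:ℝ), A (x + s) * A (t + s) : ℝ) : ℂ) * (f : ℝ → ℂ) t :=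
          (integral_congr_ae (hfae.mono fun t ht => by rw [ht])).symm
  · rw [ContinuousLinearMap.isSelfAdjoint_iff', hadj, ContinuousLinearMap.adjoint_comp,
      ContinuousLinearMap.adjoint_adjoint]
  · refine ⟨hinner f, ?_⟩
    rw [hinner f, Complex.ofReal_re]
    exact integral_nonneg fun s => by positivity
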